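/- Let A be a unique factorization domain which is a finitely generated ℂ-algebra (an integral domain), let x₁, …, x_s be pairwise non-associated prime elements of A, p₁, …, p_s positive integers, α = x₁^{p₁}⋯x_s^{p_s}, and let g(Z) ∈ A[Z]∖A be an irreducible polynomial such that for each 1 ≤ i ≤ s the ideal (x_i, g(Z)) of A[Z] is prime, g(Z) ∉ x_i A[Z], and Z − a ∉ (x_i, g(Z))A[Z] for every a ∈ A. Let B = A[Y,Z]/(αY − g(Z)) (an integral domain), with y, z the residue classes of Y, Z. If B is faithfully flat as an A-module and g'(Z) ∉ (x_i, g(Z))A[Z] for every 1 ≤ i ≤ s, then B is not isomorphic as an A-algebra to the polynomial ring A[T]; i.e. the morphism Spec B → Spec A is not a trivial 𝔸¹-bundle. -/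

import Mathlib

open Polynomial

lemma keyLemma {A D : Type*} [CommRing A] [CommRing D] [IsDomain D]
    (f : Polynomial A →+* Polynomial D) (hf : Function.Surjective f)
    (hc : ∀ a, ∃ d, f (Polynomial.C a) = Polynomial.C d) (d : D) :
    ∃ a, f (Polynomial.C a) = Polynomial.C d := by
  classical
  have hC : ∀ a : A, f (C a) = C ((f (C a)).coeff 0) := by
    intro a
    obtain ⟨e, he⟩ := hc a
    rw [he, coeff_C_zero]
  set g : A →+* D :=
    { toFun := fun a => (f (C a)).coeff 0
      map_one' := by simp
      map_mul' := by
        intro a b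
        show (f (C (a*b))).coeff 0 = (f (C a)).coeff 0 * (f (C b)).coeff 0
        rw [C_mul, map_mul, mul_coeff_zero]
      map_zero' := by simp
      map_add' := by
        intro a b
        show (f (C (a+b))).coeff 0 = (f (C a)).coeff 0 + (f (C b)).coeff 0
        rw [C_add, map_add, coeff_add] } with hgdef
  have hgC : ∀ a : A, f (C a) = C (g a) := hC
  have hrep : ∀ q : Polynomial A, f q = (q.map g).comp (f X) := by
    have : f = (eval₂RingHom Polynomial.C (f X)).comp (mapRingHom g) := by
      apply ringHom_ext
      · intro a
        simp [hgC a]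
      · simp
    intro q
    conv_lhs => rw [this]
    rfl
  by_cases h0 : (f X).natDegree = 0
  · exfalso
    obtain ⟨c, hc'⟩ := natDegree_eq_zero.mp h0
    obtain ⟨q, hq⟩ := hf X
    have : (X : Polynomial D) = C (((q.map g)).eval c) := by
      rw [← hq, hrep, ← hc', comp_C]
    exact X_ne_C _ this
  · obtain ⟨q, hq⟩ := hf (C d)
    have h1 : (C d : Polynomial D) = (q.map g).comp (f X) := by rw [← hq, hrep]
    have h2 : (q.map g).natDegree = 0 := by
      have := natDegree_comp (p := q.map g) (q := f X)
      rw [← h1, natDegree_C] at this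
      rcases Nat.mul_eq_zero.mp this.symm with h | h
      · exact h
      · exact absurd h h0
    obtain ⟨c, hc'⟩ := natDegree_eq_zero.mp h2
    refine ⟨q.coeff 0, ?_⟩
    have : (c : D) = d := by
      have : (C d : Polynomial D) = C c := by
        rw [h1, ← hc', C_comp]
      exact (C_injective this).symm
    rw [hgC, ← this]
    congr 1
    have := congrArg (fun p => Polynomial.coeff p 0) hc'
    simpa [coeff_map, eq_comm] using this



/-- Let `A` be a UFD which is a finitely generated ℂ-algebra domain,
`x₁,…,x_s` pairwise non-associated primes, `α = x₁^{p₁}⋯x_s^{p_s}` (`pᵢ > 0`), and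
`g(Z) ∈ A[Z]∖A` an irreducible polynomial such that each `(xᵢ, g(Z))` is a prime ideal
of `A[Z]`, `g ∉ xᵢA[Z]`, and `Z − a ∉ (xᵢ, g(Z))` for all `a ∈ A`.  Let
`B = A[Y,Z]/(αY − g(Z))` (a domain).  If `B` is faithfully flat over `A` and
`g'(Z) ∉ (xᵢ, g(Z))` for all `i`, then `B` is not isomorphic as an `A`-algebra to
`A[T]` (the morphism `Spec B → Spec A` is not a trivial 𝔸¹-bundle). -/
theorem stmt11
    (A : Type) [CommRing A] [IsDomain A] [UniqueFactorizationMonoid A]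
    [Algebra ℂ A] [Algebra.FiniteType ℂ A]
    (s : ℕ) (hs : 0 < s) (x : Fin s → A) (hx : ∀ i, Prime (x i))
    (hnonassoc : ∀ i j, i ≠ j → ¬ Associated (x i) (x j))
    (p : Fin s → ℕ) (hp : ∀ i, 0 < p i)
    (α : A) (hα : α = ∏ i, x i ^ p i)
    (g : Polynomial A) (hdeg : 0 < g.natDegree) (hgirr : Irreducible g)
    (hprime : ∀ i, (Ideal.span {Polynomial.C (x i), g}).IsPrime)
    (hgx : ∀ i, g ∉ Ideal.span {Polynomial.C (x i)})
    (hZa : ∀ i, ∀ a : A,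
      Polynomial.X - Polynomial.C a ∉ Ideal.span {Polynomial.C (x i), g})
    (B : Type) [CommRing B] [IsDomain B] [Algebra A B]
    (π : MvPolynomial (Fin 2) A →ₐ[A] B)
    (hπsurj : Function.Surjective π)
    (hπker : RingHom.ker π = Ideal.span
      {MvPolynomial.C α * MvPolynomial.X 0 -
        Polynomial.aeval (MvPolynomial.X 1 : MvPolynomial (Fin 2) A) g})
    (hflat : Module.FaithfullyFlat A B)
    (hder : ∀ i, Polynomial.derivative g ∉ Ideal.span {Polynomial.C (x i), g}) :
    ¬ Nonempty (B ≃ₐ[A] Polynomial A) := by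

  classical
  rintro ⟨φ⟩
  set i0 : Fin s := ⟨0, hs⟩ with hi0
  set P : Ideal (Polynomial A) := Ideal.span {Polynomial.C (x i0), g} with hPdef
  haveI hPp : P.IsPrime := hprime i0
  set Q := Polynomial A ⧸ P with hQdef
  -- basic memberships
  have hxP : Polynomial.C (x i0) ∈ P := Ideal.subset_span (Set.mem_insert _ _)
  have hgP : g ∈ P := Ideal.subset_span (Set.mem_insert_of_mem _ rfl)
  have hαdvd : x i0 ∣ α := by
    rw [hα]
    exact dvd_trans (dvd_pow_self (x i0) (hp i0).ne')
      (Finset.dvd_prod_of_mem _ (Finset.mem_univ i0))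
  have hCαP : Polynomial.C α ∈ P := by
    obtain ⟨c, hc⟩ := hαdvd
    rw [hc, Polynomial.C_mul]
    exact Ideal.mul_mem_right _ _ hxP
  -- the evaluation map ρ
  set z : Q := Ideal.Quotient.mk P Polynomial.X with hz
  set ρ : MvPolynomial (Fin 2) A →ₐ[A] Polynomial Q :=
    MvPolynomial.aeval ![Polynomial.X, Polynomial.C z] with hρ
  have hρ0 : ρ (MvPolynomial.X 0) = Polynomial.X := by simp [hρ]
  have hρ1 : ρ (MvPolynomial.X 1) = Polynomial.C z := by simp [hρ]
  -- ρ kills the generator of ker π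
  have hmkC : ∀ a : A, algebraMap A Q a = Ideal.Quotient.mk P (Polynomial.C a) := by
    intro a
    rfl
  have hρF : ρ (MvPolynomial.C α * MvPolynomial.X 0 -
      Polynomial.aeval (MvPolynomial.X 1 : MvPolynomial (Fin 2) A) g) = 0 := by
    rw [map_sub, map_mul]
    have h1 : ρ (MvPolynomial.C α) = 0 := by
      rw [MvPolynomial.aeval_C]
      rw [Polynomial.algebraMap_apply, hmkC]
      rw [Ideal.Quotient.eq_zero_iff_mem.mpr hCαP, map_zero]
    have haevalz : ∀ q : Polynomial A, Polynomial.aeval z q = Ideal.Quotient.mk P q := by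
      intro q
      have : (Ideal.Quotient.mkₐ A P) q = Polynomial.aeval ((Ideal.Quotient.mkₐ A P) Polynomial.X) q := by
        rw [Polynomial.aeval_algHom_apply]
        simp
      simpa [hz] using this.symm
    have hCz : ∀ q : Polynomial A,
        Polynomial.aeval (Polynomial.C z) q = Polynomial.C (Ideal.Quotient.mk P q) := by
      intro q
      rw [← haevalz]
      exact Polynomial.aeval_algHom_apply (Polynomial.CAlgHom (R := A)) z q
    have h2 : ρ (Polynomial.aeval (MvPolynomial.X 1 :
        MvPolynomial (Fin 2) A) g) = 0 := by
      rw [← Polynomial.aeval_algHom_apply, hρ1, hCz,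
        Ideal.Quotient.eq_zero_iff_mem.mpr hgP, map_zero]
    rw [h1, h2, zero_mul, sub_zero]
  have hker : ∀ f ∈ RingHom.ker π, ρ f = 0 := by
    intro f hf
    rw [hπker, Ideal.mem_span_singleton] at hf
    obtain ⟨c, rfl⟩ := hf
    rw [map_mul, hρF, zero_mul]
  -- ρ is surjective
  have hρsurj : Function.Surjective ρ := by
    intro f
    suffices h : f ∈ ρ.range by
      obtain ⟨m, hm⟩ := h
      exact ⟨m, hm⟩
    have hX : (Polynomial.X : Polynomial Q) ∈ ρ.range := ⟨MvPolynomial.X 0, hρ0⟩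
    have hCall : ∀ t : Q, Polynomial.C t ∈ ρ.range := by
      intro t
      obtain ⟨q, rfl⟩ := Ideal.Quotient.mk_surjective t
      refine ⟨Polynomial.aeval (MvPolynomial.X 1) q, ?_⟩
      show ρ (Polynomial.aeval (MvPolynomial.X 1) q) = Polynomial.C (Ideal.Quotient.mk P q)
      rw [← Polynomial.aeval_algHom_apply, hρ1]
      have haevalz : Polynomial.aeval z q = Ideal.Quotient.mk P q := by
        have : (Ideal.Quotient.mkₐ A P) q = Polynomial.aeval ((Ideal.Quotient.mkₐ A P) Polynomial.X) q := by
          rw [Polynomial.aeval_algHom_apply]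
          simp
        simpa [hz] using this.symm
      rw [← haevalz]
      exact Polynomial.aeval_algHom_apply (Polynomial.CAlgHom (R := A)) z q
    induction f using Polynomial.induction_on with
    | C a => exact hCall a
    | add p q hp hq => exact Subalgebra.add_mem _ hp hq
    | monomial n a ih =>
        rw [pow_succ, ← mul_assoc]
        exact Subalgebra.mul_mem _ ih hX
  -- lift ρ through π
  set e : (MvPolynomial (Fin 2) A ⧸ RingHom.ker π) ≃ₐ[A] B :=
    Ideal.quotientKerAlgEquivOfSurjective hπsurj with he
  set ψ0 : (MvPolynomial (Fin 2) A ⧸ RingHom.ker π) →ₐ[A] Polynomial Q :=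
    Ideal.Quotient.liftₐ (RingHom.ker π) ρ hker with hψ0
  set ψ : B →ₐ[A] Polynomial Q := ψ0.comp (e.symm : B →ₐ[A] _) with hψ
  have hψ0surj : Function.Surjective ψ0 := by
    intro f
    obtain ⟨m, hm⟩ := hρsurj f
    exact ⟨Ideal.Quotient.mk _ m, by rw [hψ0, Ideal.Quotient.liftₐ_apply]; exact hm⟩
  have hψsurj : Function.Surjective ψ := hψ0surj.comp e.symm.surjective
  -- the composite map Φ : A[T] → Q[Y]
  set Φ : Polynomial A →ₐ[A] Polynomial Q := ψ.comp (φ.symm : Polynomial A →ₐ[A] B) with hΦ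
  have hΦsurj : Function.Surjective Φ := hψsurj.comp φ.symm.surjective
  have hΦC : ∀ a : A, Φ (Polynomial.C a) = Polynomial.C (Ideal.Quotient.mk P (Polynomial.C a)) := by
    intro a
    have h := Φ.commutes a
    rw [Polynomial.algebraMap_eq] at h
    rw [h, Polynomial.algebraMap_apply, hmkC]
  obtain ⟨a, ha⟩ := keyLemma Φ.toRingHom hΦsurj
    (fun a => ⟨Ideal.Quotient.mk P (Polynomial.C a), hΦC a⟩) z
  have : Ideal.Quotient.mk P (Polynomial.C a) = z := by
    have h1 : Φ (Polynomial.C a) = Polynomial.C z := ha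
    rw [hΦC a] at h1
    exact Polynomial.C_injective h1
  have hmem : Polynomial.X - Polynomial.C a ∈ P := by
    rw [hz] at this
    exact Ideal.Quotient.eq.mp this.symm
  exact hZa i0 a hmem
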